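/- For every integer k ≥ 2, letting n = 2^k and m = 3·2^{k−2}, there exists a shuffle-preserved edge coloring of the complete bipartite graph K_{n,n} (each edge receiving exactly one color) that is m-local (every vertex sees at most m distinct colors on its incident edges) and contains no monochromatic copy of K_{2,2}. -/
import Mathlib

def m2 : ℕ → ℕ → ℕ
  | 0,0=>0 | 0,1=>0 | 0,2=>6 | 0,3=>7
  | 1,0=>4 | 1,1=>5 | 1,2=>1 | 1,3=>1
  | 2,0=>2 | 2,1=>2 | 2,2=>6 | 2,3=>7
  | 3,0=>4 | 3,1=>5 | 3,2=>3 | 3,3=>3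
  | _,_=>0

def g : ℕ → ℕ → ℕ → ℕ
  | 0, u, v => m2 u v
  | (j+1), u, v =>
      (2 * (u / 2^(j+2)) + v / 2^(j+2)) * (8 * 4^j) + g j (u % 2^(j+2)) (v % 2^(j+2))

lemma m2_lt : ∀ u < 4, ∀ v < 4, m2 u v < 8 := by decide

lemma split_eq {s c c' b b' : ℕ} (hb : b < s) (hb' : b' < s)
    (h : c * s + b = c' * s + b') : c = c' ∧ b = b' := by
  have key : ∀ x y p q : ℕ, p < s → x < y → x * s + p < y * s + q := by
    intro x y p q hp hxy
    calc x * s + p < x * s + s := by omega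
      _ = (x + 1) * s := by ring
      _ ≤ y * s := Nat.mul_le_mul_right s hxy
      _ ≤ y * s + q := Nat.le_add_right _ _
  have hc : c = c' := by
    rcases Nat.lt_trichotomy c c' with h2 | h2 | h2
    · exact absurd h (Nat.ne_of_lt (key c c' b b' hb h2))
    · exact h2
    · exact absurd h.symm (Nat.ne_of_lt (key c' c b' b hb' h2))
  subst hc
  exact ⟨rfl, by omega⟩

lemma g_lt : ∀ j u v, u < 2^(j+2) → v < 2^(j+2) → g j u v < 8 * 4^j := by
  intro j
  induction j with
  | zero => intro u v hu hv; exact m2_lt u hu v hv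
  | succ j ih =>
      intro u v hu hv
      have hN : (0:ℕ) < 2^(j+2) := by positivity
      have h2 : (2:ℕ)^(j+1+2) = 2 * 2^(j+2) := by ring
      have hud : u / 2^(j+2) < 2 := by
        rw [Nat.div_lt_iff_lt_mul hN]; omega
      have hvd : v / 2^(j+2) < 2 := by
        rw [Nat.div_lt_iff_lt_mul hN]; omega
      have hb := ih (u % 2^(j+2)) (v % 2^(j+2)) (Nat.mod_lt _ hN) (Nat.mod_lt _ hN)
      have hc : 2 * (u / 2^(j+2)) + v / 2^(j+2) ≤ 3 := by omega
      have := Nat.mul_le_mul_right (8 * 4^j) hc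
      have h4 : (8:ℕ) * 4^(j+1) = 4 * (8 * 4^j) := by ring
      show (2 * (u / 2^(j+2)) + v / 2^(j+2)) * (8 * 4^j) + g j (u % 2^(j+2)) (v % 2^(j+2)) < 8 * 4^(j+1)
      omega

lemma m2_inj_fin : ∀ u u' v v' : Fin 4, u ≠ u' → v ≠ v' →
    m2 u.val v.val ≠ m2 u'.val v'.val := by decide

lemma m2_inj : ∀ u < 4, ∀ u' < 4, ∀ v < 4, ∀ v' < 4,
    u ≠ u' → v ≠ v' → m2 u v ≠ m2 u' v' := by
  intro u hu u' hu' v hv v' hv' huu hvv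
  exact m2_inj_fin ⟨u, hu⟩ ⟨u', hu'⟩ ⟨v, hv⟩ ⟨v', hv'⟩
    (fun h => huu (congrArg Fin.val h)) (fun h => hvv (congrArg Fin.val h))

lemma g_inj : ∀ j u u' v v', u < 2^(j+2) → u' < 2^(j+2) → v < 2^(j+2) → v' < 2^(j+2) →
    u ≠ u' → v ≠ v' → g j u v ≠ g j u' v' := by
  intro j
  induction j with
  | zero => intro u u' v v' hu hu' hv hv' huu hvv; exact m2_inj u hu u' hu' v hv v' hv' huu hvv
  | succ j ih =>
      intro u u' v v' hu hu' hv hv' huu hvv heq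
      have hN : (0:ℕ) < 2^(j+2) := by positivity
      have h2 : (2:ℕ)^(j+1+2) = 2 * 2^(j+2) := by ring
      have hud : u / 2^(j+2) < 2 := by rw [Nat.div_lt_iff_lt_mul hN]; omega
      have hud' : u' / 2^(j+2) < 2 := by rw [Nat.div_lt_iff_lt_mul hN]; omega
      have hvd : v / 2^(j+2) < 2 := by rw [Nat.div_lt_iff_lt_mul hN]; omega
      have hvd' : v' / 2^(j+2) < 2 := by rw [Nat.div_lt_iff_lt_mul hN]; omega
      have hb := g_lt j (u % 2^(j+2)) (v % 2^(j+2)) (Nat.mod_lt _ hN) (Nat.mod_lt _ hN)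
      have hb' := g_lt j (u' % 2^(j+2)) (v' % 2^(j+2)) (Nat.mod_lt _ hN) (Nat.mod_lt _ hN)
      have heq' : (2 * (u / 2^(j+2)) + v / 2^(j+2)) * (8 * 4^j) + g j (u % 2^(j+2)) (v % 2^(j+2))
          = (2 * (u' / 2^(j+2)) + v' / 2^(j+2)) * (8 * 4^j) + g j (u' % 2^(j+2)) (v' % 2^(j+2)) := heq
      obtain ⟨hdiv, hmod⟩ := split_eq hb hb' heq'
      have haux : ∀ a a' b b' : ℕ, b < 2 → b' < 2 → 2*a+b = 2*a'+b' → a = a' ∧ b = b' := by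
        intro a a' b b' h1 h2 h3; omega
      obtain ⟨hud2, hvd2⟩ := haux _ _ _ _ hvd hvd' hdiv
      have hmm : ∀ a b : ℕ, a / 2^(j+2) = b / 2^(j+2) → a % 2^(j+2) = b % 2^(j+2) → a = b := by
        intro a b hq hr
        rw [← Nat.div_add_mod a (2^(j+2)), ← Nat.div_add_mod b (2^(j+2)), hq, hr]
      have humod : u % 2^(j+2) ≠ u' % 2^(j+2) := fun h => huu (hmm u u' hud2 h)
      have hvmod : v % 2^(j+2) ≠ v' % 2^(j+2) := fun h => hvv (hmm v v' hvd2 h)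
      exact ih _ _ _ _ (Nat.mod_lt _ hN) (Nat.mod_lt _ hN) (Nat.mod_lt _ hN) (Nat.mod_lt _ hN)
        humod hvmod hmod

lemma m2_row : ∀ u < 4, ((Finset.range 4).image (m2 u)).card ≤ 3 := by decide

lemma m2_col : ∀ v < 4, ((Finset.range 4).image (fun u => m2 u v)).card ≤ 3 := by decide

lemma g_row : ∀ j, ∀ u < 2^(j+2),
    ((Finset.range (2^(j+2))).image (g j u)).card ≤ 3 * 2^j := by
  intro j
  induction j with
  | zero => intro u hu; simpa [g] using m2_row u hu
  | succ j ih =>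
      intro u hu
      have hN : (0:ℕ) < 2^(j+2) := by positivity
      have h2 : (2:ℕ)^(j+1+2) = 2 * 2^(j+2) := by ring
      have hsub : (Finset.range (2^(j+1+2))).image (g (j+1) u) ⊆
          ((Finset.range (2^(j+2))).image (g j (u % 2^(j+2)))).image
            (fun x => (2 * (u / 2^(j+2))) * (8 * 4^j) + x) ∪
          ((Finset.range (2^(j+2))).image (g j (u % 2^(j+2)))).image
            (fun x => (2 * (u / 2^(j+2)) + 1) * (8 * 4^j) + x) := by
        intro x hx
        simp only [Finset.mem_image, Finset.mem_range] at hx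
        obtain ⟨v, hv, hgv⟩ := hx
        have hvd : v / 2^(j+2) < 2 := by rw [Nat.div_lt_iff_lt_mul hN]; omega
        have hgv' : (2 * (u / 2^(j+2)) + v / 2^(j+2)) * (8 * 4^j)
            + g j (u % 2^(j+2)) (v % 2^(j+2)) = x := hgv
        have hmem : g j (u % 2^(j+2)) (v % 2^(j+2)) ∈
            (Finset.range (2^(j+2))).image (g j (u % 2^(j+2))) :=
          Finset.mem_image_of_mem _ (Finset.mem_range.mpr (Nat.mod_lt _ hN))
        have hcase : v / 2^(j+2) = 0 ∨ v / 2^(j+2) = 1 := by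
          rcases Nat.lt_or_ge (v / 2^(j+2)) 1 with h | h
          · exact Or.inl (Nat.lt_one_iff.mp h)
          · exact Or.inr (Nat.le_antisymm (Nat.lt_succ_iff.mp hvd) h)
        rcases hcase with h | h
        · apply Finset.mem_union_left
          refine Finset.mem_image.mpr ⟨_, hmem, ?_⟩
          rw [← hgv', h]; ring
        · apply Finset.mem_union_right
          refine Finset.mem_image.mpr ⟨_, hmem, ?_⟩
          rw [← hgv', h]
      have hcard := ih (u % 2^(j+2)) (Nat.mod_lt _ hN)
      calc ((Finset.range (2^(j+1+2))).image (g (j+1) u)).card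
          ≤ _ := Finset.card_le_card hsub
        _ ≤ (((Finset.range (2^(j+2))).image (g j (u % 2^(j+2)))).image
              (fun x => (2 * (u / 2^(j+2))) * (8 * 4^j) + x)).card +
            (((Finset.range (2^(j+2))).image (g j (u % 2^(j+2)))).image
              (fun x => (2 * (u / 2^(j+2)) + 1) * (8 * 4^j) + x)).card := Finset.card_union_le _ _
        _ ≤ ((Finset.range (2^(j+2))).image (g j (u % 2^(j+2)))).card +
            ((Finset.range (2^(j+2))).image (g j (u % 2^(j+2)))).card :=
              Nat.add_le_add (Finset.card_image_le) (Finset.card_image_le)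
        _ ≤ 3 * 2^j + 3 * 2^j := by omega
        _ = 3 * 2^(j+1) := by ring

lemma g_col : ∀ j, ∀ v < 2^(j+2),
    ((Finset.range (2^(j+2))).image (fun u => g j u v)).card ≤ 3 * 2^j := by
  intro j
  induction j with
  | zero => intro v hv; simpa [g] using m2_col v hv
  | succ j ih =>
      intro v hv
      have hN : (0:ℕ) < 2^(j+2) := by positivity
      have h2 : (2:ℕ)^(j+1+2) = 2 * 2^(j+2) := by ring
      have hsub : (Finset.range (2^(j+1+2))).image (fun u => g (j+1) u v) ⊆
          ((Finset.range (2^(j+2))).image (fun u => g j u (v % 2^(j+2)))).image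
            (fun x => (v / 2^(j+2)) * (8 * 4^j) + x) ∪
          ((Finset.range (2^(j+2))).image (fun u => g j u (v % 2^(j+2)))).image
            (fun x => (2 + v / 2^(j+2)) * (8 * 4^j) + x) := by
        intro x hx
        simp only [Finset.mem_image, Finset.mem_range] at hx
        obtain ⟨u, hu, hgu⟩ := hx
        have hud : u / 2^(j+2) < 2 := by rw [Nat.div_lt_iff_lt_mul hN]; omega
        have hgu' : (2 * (u / 2^(j+2)) + v / 2^(j+2)) * (8 * 4^j)
            + g j (u % 2^(j+2)) (v % 2^(j+2)) = x := hgu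
        have hmem : g j (u % 2^(j+2)) (v % 2^(j+2)) ∈
            (Finset.range (2^(j+2))).image (fun u => g j u (v % 2^(j+2))) :=
          Finset.mem_image_of_mem _ (Finset.mem_range.mpr (Nat.mod_lt _ hN))
        have hcase : u / 2^(j+2) = 0 ∨ u / 2^(j+2) = 1 := by
          rcases Nat.lt_or_ge (u / 2^(j+2)) 1 with h | h
          · exact Or.inl (Nat.lt_one_iff.mp h)
          · exact Or.inr (Nat.le_antisymm (Nat.lt_succ_iff.mp hud) h)
        rcases hcase with h | h
        · apply Finset.mem_union_left
          refine Finset.mem_image.mpr ⟨_, hmem, ?_⟩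
          rw [← hgu', h]; ring
        · apply Finset.mem_union_right
          refine Finset.mem_image.mpr ⟨_, hmem, ?_⟩
          rw [← hgu', h]
      have hcard := ih (v % 2^(j+2)) (Nat.mod_lt _ hN)
      calc ((Finset.range (2^(j+1+2))).image (fun u => g (j+1) u v)).card
          ≤ _ := Finset.card_le_card hsub
        _ ≤ (((Finset.range (2^(j+2))).image (fun u => g j u (v % 2^(j+2)))).image
              (fun x => (v / 2^(j+2)) * (8 * 4^j) + x)).card +
            (((Finset.range (2^(j+2))).image (fun u => g j u (v % 2^(j+2)))).image
              (fun x => (2 + v / 2^(j+2)) * (8 * 4^j) + x)).card := Finset.card_union_le _ _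
        _ ≤ ((Finset.range (2^(j+2))).image (fun u => g j u (v % 2^(j+2)))).card +
            ((Finset.range (2^(j+2))).image (fun u => g j u (v % 2^(j+2)))).card :=
              Nat.add_le_add (Finset.card_image_le) (Finset.card_image_le)
        _ ≤ 3 * 2^j + 3 * 2^j := by omega
        _ = 3 * 2^(j+1) := by ring

lemma image_univ_fin (n : ℕ) (h : ℕ → ℕ) :
    (Finset.univ.image (fun v : Fin n => h v.val)) = (Finset.range n).image h := by
  ext x
  simp only [Finset.mem_image, Finset.mem_univ, true_and, Finset.mem_range]
  constructor
  · rintro ⟨v, hv⟩; exact ⟨v.val, v.isLt, hv⟩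
  · rintro ⟨a, ha, hx⟩; exact ⟨⟨a, ha⟩, hx⟩

/-- For n = 2^k and m = 3·2^(k-2), there is a shuffle-preserved m-local
edge coloring of K_{n,n} with no monochromatic K_{2,2}. -/
theorem exists_mlocal_coloring_no_mono_K22
    (k : ℕ) (hk : 2 ≤ k) :
    ∃ f : Fin (2 ^ k) → Fin (2 ^ k) → ℕ,
      (∀ u u' v v', u ≠ u' → v ≠ v' → f u v = f u' v' →
        f u v' = f u v ∧ f u' v = f u v) ∧
      (∀ u, (Finset.univ.image (fun v => f u v)).card ≤ 3 * 2 ^ (k - 2)) ∧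
      (∀ v, (Finset.univ.image (fun u => f u v)).card ≤ 3 * 2 ^ (k - 2)) ∧
      ¬ ∃ u u' v v', u ≠ u' ∧ v ≠ v' ∧
        f u v = f u v' ∧ f u v = f u' v ∧ f u v = f u' v' := by
  have hkj : k = (k - 2) + 2 := by omega
  have hNk : (2:ℕ)^k = 2^((k-2)+2) := by rw [← hkj]
  have hr : Finset.range (2^k) = Finset.range (2^((k-2)+2)) := by rw [hNk]
  refine ⟨fun u v => g (k-2) u.val v.val, ?_, ?_, ?_, ?_⟩
  · intro u u' v v' hu hv heq
    exact absurd heq (g_inj (k-2) u.val u'.val v.val v'.val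
      (hNk ▸ u.isLt) (hNk ▸ u'.isLt) (hNk ▸ v.isLt) (hNk ▸ v'.isLt)
      (fun h => hu (Fin.val_injective h)) (fun h => hv (Fin.val_injective h)))
  · intro u
    show (Finset.univ.image (fun v : Fin (2^k) => g (k-2) u.val v.val)).card ≤ 3 * 2^(k-2)
    rw [show (Finset.univ.image (fun v : Fin (2^k) => g (k-2) u.val v.val))
        = (Finset.range (2^k)).image (g (k-2) u.val) from image_univ_fin (2^k) (g (k-2) u.val), hr]
    exact g_row (k-2) u.val (hNk ▸ u.isLt)
  · intro v
    show (Finset.univ.image (fun u : Fin (2^k) => g (k-2) u.val v.val)).card ≤ 3 * 2^(k-2)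
    rw [show (Finset.univ.image (fun u : Fin (2^k) => g (k-2) u.val v.val))
        = (Finset.range (2^k)).image (fun x => g (k-2) x v.val) from image_univ_fin (2^k) (fun x => g (k-2) x v.val), hr]
    exact g_col (k-2) v.val (hNk ▸ v.isLt)
  · rintro ⟨u, u', v, v', hu, hv, -, -, h3⟩
    exact g_inj (k-2) u.val u'.val v.val v'.val
      (hNk ▸ u.isLt) (hNk ▸ u'.isLt) (hNk ▸ v.isLt) (hNk ▸ v'.isLt)
      (fun h => hu (Fin.val_injective h)) (fun h => hv (Fin.val_injective h)) h3
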